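/- Let P = {p_i : i ≥ 1} and Q = {q_k : k ≥ 1} be two probability distributions on a countably infinite alphabet, each with all probabilities positive, with Q non-increasing. If Q belongs to Domain 1 and Q dominates P, then P belongs to Domain 1. -/
import Mathlib


open Filter Topology

/-- The tail index `t_n = n * ∑_k p_k (1 - p_k)^n`. -/
noncomputable def tailIndex (p : ℕ → ℝ) (n : ℕ) : ℝ :=
  (n : ℝ) * ∑' k, p k * (1 - p k) ^ n

/-- `P` belongs to Domain 1: `limsup t_n` is a finite positive constant. -/
noncomputable def InDomain1 (p : ℕ → ℝ) : Prop :=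
  ∃ c : ℝ, 0 < c ∧
    Filter.limsup (fun n : ℕ => ((tailIndex p n : ℝ) : EReal)) atTop = (c : EReal)

/-- A non-increasing distribution `Q` dominates `P` if there is a finite positive integer
`M` such that `#{i : q_{k+1} < p_i ≤ q_k} ≤ M` for every `k`. -/
def Dominates (q p : ℕ → ℝ) : Prop :=
  ∃ M : ℕ, 0 < M ∧ ∀ k : ℕ, {i : ℕ | q (k + 1) < p i ∧ p i ≤ q k}.encard ≤ (M : ℕ∞)

/-- universal bound: n * x(1-x)^n ≤ 1 on [0,1] -/
lemma aux_nmul_le_one (n : ℕ) {x : ℝ} (h0 : 0 ≤ x) (h1 : x ≤ 1) :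
    (n : ℝ) * (x * (1 - x) ^ n) ≤ 1 := by
  have hpow : (0:ℝ) ≤ (1 - x) ^ n := pow_nonneg (by linarith) n
  have hb : 1 + (n:ℝ) * x ≤ (1 + x) ^ n := one_add_mul_le_pow (by linarith) n
  calc (n : ℝ) * (x * (1 - x) ^ n) = ((n:ℝ) * x) * (1-x)^n := by ring
    _ ≤ (1 + (n:ℝ)*x) * (1-x)^n := by nlinarith
    _ ≤ (1 + x)^n * (1-x)^n := by nlinarith
    _ = ((1+x)*(1-x))^n := (mul_pow _ _ n).symm
    _ ≤ 1 := by
        have : (1+x)*(1-x) = 1 - x^2 := by ring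
        rw [this]
        exact pow_le_one₀ (by nlinarith) (by nlinarith)

lemma aux_hasDeriv (n : ℕ) (x : ℝ) :
    HasDerivAt (fun y : ℝ => y * (1 - y) ^ n)
      (1 * (1-x)^n + x * ((n:ℝ) * (1-x)^(n-1) * (-1))) x := by
  have h1 : HasDerivAt (fun y : ℝ => 1 - y) (-1) x := by
    simpa using (hasDerivAt_id x).const_sub 1
  exact (hasDerivAt_id x).mul (h1.pow n)

lemma aux_mono (n : ℕ) : MonotoneOn (fun x : ℝ => x * (1-x)^n) (Set.Icc 0 (1/((n:ℝ)+1))) := by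
  have hpos : (0:ℝ) < 1/((n:ℝ)+1) := by positivity
  apply monotoneOn_of_deriv_nonneg (convex_Icc _ _)
  · exact Continuous.continuousOn (by continuity)
  · intro x hx
    exact (aux_hasDeriv n x).differentiableAt.differentiableWithinAt
  · intro x hx
    rw [interior_Icc] at hx
    rw [(aux_hasDeriv n x).deriv]
    obtain ⟨hx0, hx1⟩ := hx
    have hx1' : ((n:ℝ)+1) * x < 1 := by
      rw [div_eq_inv_mul, mul_one] at hx1
      calc ((n:ℝ)+1)*x < ((n:ℝ)+1) * ((n:ℝ)+1)⁻¹ := by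
            apply mul_lt_mul_of_pos_left hx1 (by positivity)
        _ = 1 := by field_simp
    have hxle1 : x ≤ 1 := by nlinarith
    have hp : (0:ℝ) ≤ (1-x)^(n-1) := pow_nonneg (by linarith) _
    rcases Nat.eq_zero_or_pos n with h0 | h0
    · subst h0; simp
    · have hn : n - 1 + 1 = n := Nat.succ_pred_eq_of_pos h0
      have : (1-x)^n = (1-x) * (1-x)^(n-1) := by
        rw [← pow_succ']
        rw [hn]
      rw [this]
      have hnx : (n:ℝ) * x ≤ 1 - x := by nlinarith
      nlinarith [mul_le_mul_of_nonneg_right hnx hp]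

lemma aux_anti (n : ℕ) : AntitoneOn (fun x : ℝ => x * (1-x)^n) (Set.Icc (1/((n:ℝ)+1)) 1) := by
  apply antitoneOn_of_deriv_nonpos (convex_Icc _ _)
  · exact Continuous.continuousOn (by continuity)
  · intro x hx
    exact (aux_hasDeriv n x).differentiableAt.differentiableWithinAt
  · intro x hx
    rw [interior_Icc] at hx
    rw [(aux_hasDeriv n x).deriv]
    obtain ⟨hx0, hx1⟩ := hx
    have hxpos : 0 < x := lt_trans (by positivity) hx0
    have hx0' : 1 < ((n:ℝ)+1) * x := by
      rw [div_eq_inv_mul, mul_one] at hx0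
      calc (1:ℝ) = ((n:ℝ)+1) * ((n:ℝ)+1)⁻¹ := by field_simp
        _ < ((n:ℝ)+1)*x := by apply mul_lt_mul_of_pos_left hx0 (by positivity)
    rcases Nat.eq_zero_or_pos n with h0 | h0
    · subst h0; simp at hx0'; linarith
    · have hn : n - 1 + 1 = n := Nat.succ_pred_eq_of_pos h0
      have he : (1-x)^n = (1-x) * (1-x)^(n-1) := by rw [← pow_succ', hn]
      rw [he]
      have hp : (0:ℝ) ≤ (1-x)^(n-1) := pow_nonneg (by linarith) _
      have hnx : 1 - x ≤ (n:ℝ) * x := by nlinarith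
      nlinarith [mul_le_mul_of_nonneg_right hnx hp]

lemma aux_key (n : ℕ) {a b x : ℝ} (ha : 0 ≤ a) (hax : a < x) (hxb : x ≤ b) (hb1 : b ≤ 1) :
    (n:ℝ) * (x * (1-x)^n) ≤ (n:ℝ) * (a * (1-a)^n) + (n:ℝ) * (b * (1-b)^n)
      + (if a * ((n:ℝ)+1) < 1 ∧ 1 ≤ b * ((n:ℝ)+1) then 1 else 0) := by
  have hx0 : 0 ≤ x := le_trans ha hax.le
  have hga : 0 ≤ (n:ℝ) * (a * (1-a)^n) := by
    have : (0:ℝ) ≤ (1-a)^n := pow_nonneg (by linarith) n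
    positivity
  have hgb : 0 ≤ (n:ℝ) * (b * (1-b)^n) := by
    have hb0 : 0 ≤ b := le_trans hx0 hxb
    have : (0:ℝ) ≤ (1-b)^n := pow_nonneg (by linarith) n
    positivity
  have hnpos : (0:ℝ) ≤ (n:ℝ) := Nat.cast_nonneg n
  by_cases hc : a * ((n:ℝ)+1) < 1 ∧ 1 ≤ b * ((n:ℝ)+1)
  · rw [if_pos hc]
    have := aux_nmul_le_one n hx0 (le_trans hxb hb1)
    linarith
  · rw [if_neg hc]
    rcases not_and_or.mp hc with h | h
    · -- 1 ≤ a*(n+1) : decreasing region, g x ≤ g a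
      push_neg at h
      have hnp : (0:ℝ) < (n:ℝ)+1 := by positivity
      have haI : a ∈ Set.Icc (1/((n:ℝ)+1)) 1 :=
        ⟨by rw [div_le_iff₀ hnp]; linarith, by linarith⟩
      have hxI : x ∈ Set.Icc (1/((n:ℝ)+1)) 1 :=
        ⟨le_trans haI.1 hax.le, le_trans hxb hb1⟩
      have := aux_anti n haI hxI hax.le
      simp only at this
      nlinarith [mul_le_mul_of_nonneg_left this hnpos]
    · -- b*(n+1) < 1 : increasing region, g x ≤ g b
      push_neg at h
      have hnp : (0:ℝ) < (n:ℝ)+1 := by positivity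
      have hbI : b ∈ Set.Icc (0:ℝ) (1/((n:ℝ)+1)) :=
        ⟨le_trans hx0 hxb, by rw [le_div_iff₀ hnp]; linarith⟩
      have hxI : x ∈ Set.Icc (0:ℝ) (1/((n:ℝ)+1)) := ⟨hx0, le_trans hxb hbI.2⟩
      have := aux_mono n hxI hbI hxb
      simp only at this
      nlinarith [mul_le_mul_of_nonneg_left this hnpos]

set_option maxHeartbeats 1000000 in
/-- If `Q` is in Domain 1 and `Q` dominates `P`, then `P` is in Domain 1. -/
theorem stmt11 (p q : ℕ → ℝ) (hp : ∀ i, 0 < p i) (hq : ∀ k, 0 < q k)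
    (hpsum : ∑' i, p i = 1) (hqsum : ∑' k, q k = 1) (hqmono : Antitone q)
    (hQ1 : InDomain1 q) (hdom : Dominates q p) :
    InDomain1 p := by
  classical
  obtain ⟨c, hc, hlimq⟩ := hQ1
  obtain ⟨M, hM, hdomM⟩ := hdom
  -- basic facts
  have hps : Summable p := by
    by_contra h
    rw [tsum_eq_zero_of_not_summable h] at hpsum
    norm_num at hpsum
  have hqs : Summable q := by
    by_contra h
    rw [tsum_eq_zero_of_not_summable h] at hqsum
    norm_num at hqsum
  have hple : ∀ i, p i ≤ 1 := fun i => hpsum ▸ Summable.le_tsum hps i fun j _ => (hp j).le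
  have hqle : ∀ k, q k ≤ 1 := fun k => hqsum ▸ Summable.le_tsum hqs k fun j _ => (hq j).le
  have hsumf : ∀ n, Summable (fun i => p i * (1 - p i) ^ n) := by
    intro n
    apply Summable.of_nonneg_of_le (fun i => ?_) (fun i => ?_) hps
    · exact mul_nonneg (hp i).le (pow_nonneg (by linarith [hple i]) n)
    · calc p i * (1 - p i)^n ≤ p i * 1 := by
            apply mul_le_mul_of_nonneg_left _ (hp i).le
            exact pow_le_one₀ (by linarith [hple i]) (by linarith [hp i])
        _ = p i := mul_one _
  have hsumq : ∀ n, Summable (fun k => q k * (1 - q k) ^ n) := by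
    intro n
    apply Summable.of_nonneg_of_le (fun k => ?_) (fun k => ?_) hqs
    · exact mul_nonneg (hq k).le (pow_nonneg (by linarith [hqle k]) n)
    · calc q k * (1 - q k)^n ≤ q k * 1 := by
            apply mul_le_mul_of_nonneg_left _ (hq k).le
            exact pow_le_one₀ (by linarith [hqle k]) (by linarith [hq k])
        _ = q k := mul_one _
  have hsumf' : ∀ n : ℕ, Summable (fun i => (n:ℝ) * (p i * (1 - p i) ^ n)) :=
    fun n => (hsumf n).mul_left _
  have hsumq' : ∀ n : ℕ, Summable (fun k => (n:ℝ) * (q k * (1 - q k) ^ n)) :=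
    fun n => (hsumq n).mul_left _
  have htp : ∀ n : ℕ, tailIndex p n = ∑' i, (n:ℝ) * (p i * (1 - p i) ^ n) := by
    intro n; rw [tailIndex, tsum_mul_left]
  have htq : ∀ n : ℕ, tailIndex q n = ∑' k, (n:ℝ) * (q k * (1 - q k) ^ n) := by
    intro n; rw [tailIndex, tsum_mul_left]
  -- lower bound : frequently ≥ 1/8
  have hfreq : ∃ᶠ n in atTop, (1/8 : ℝ) ≤ tailIndex p n := by
    rw [frequently_atTop]
    intro N
    have hptend : Tendsto p atTop (𝓝 0) := hps.tendsto_atTop_zero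
    have hεpos : (0:ℝ) < min (1/4) (1/(2*(N:ℝ)+2)) := by positivity
    obtain ⟨i, hi⟩ := (hptend.eventually_lt_const hεpos).exists
    have hx0 : 0 < p i := hp i
    have hx4 : p i ≤ 1/4 := le_of_lt (lt_of_lt_of_le hi (min_le_left _ _))
    have hxN : p i < 1/(2*(N:ℝ)+2) := lt_of_lt_of_le hi (min_le_right _ _)
    set t := ⌈1/(2 * p i)⌉₊ with ht
    have htge : 1/(2 * p i) ≤ (t:ℝ) := Nat.le_ceil _
    have htlt : (t:ℝ) < 1/(2 * p i) + 1 := Nat.ceil_lt_add_one (by positivity)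
    have h2p : (0:ℝ) < 2 * p i := by positivity
    have htx1 : 1/2 ≤ (t:ℝ) * p i := by
      rw [div_le_iff₀ h2p] at htge
      nlinarith
    have htx2 : (t:ℝ) * p i ≤ 3/4 := by
      have h2 := mul_lt_mul_of_pos_right htlt hx0
      have h3 : (1/(2 * p i)) * p i = 1/2 := by
        field_simp <;> ring
      nlinarith
    have hpow : 1/4 ≤ (1 - p i)^t := by
      have hb : 1 + (t:ℝ) * (-(p i)) ≤ (1 + (-(p i)))^t := one_add_mul_le_pow (by linarith) t
      have : (1 + -(p i)) = 1 - p i := by ring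
      rw [this] at hb
      nlinarith
    refine ⟨t, ?_, ?_⟩
    · -- N ≤ t
      have : (N:ℝ) < (t:ℝ) := by
        have h1 : 2 * p i < 1/((N:ℝ)+1) := by
          rw [lt_div_iff₀ (by positivity)] at hxN ⊢
          linarith
        have h2 : (N:ℝ)+1 < 1/(2*p i) := by
          rw [lt_div_iff₀ (by positivity)]
          rw [lt_div_iff₀ (by positivity)] at h1
          linarith
        linarith
      exact_mod_cast this.le
    · rw [htp t]
      have hterm : (1/8 : ℝ) ≤ (t:ℝ) * (p i * (1 - p i)^t) := by
        calc (1/8 : ℝ) = (1/2) * (1/4) := by norm_num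
          _ ≤ ((t:ℝ) * p i) * ((1 - p i)^t) := by
              apply mul_le_mul htx1 hpow (by norm_num) (by linarith)
          _ = (t:ℝ) * (p i * (1 - p i)^t) := by ring
      refine le_trans hterm (Summable.le_tsum (hsumf' t) i fun j _ => ?_)
      have h1 : (0:ℝ) ≤ (1 - p j)^t := pow_nonneg (by linarith [hple j]) t
      have := (hp j).le
      positivity
  -- setup for the upper bound
  have hq0t : Tendsto q atTop (𝓝 0) := hqs.tendsto_atTop_zero
  have hm : ∀ i, ∃ k, q k < p i := fun i => (hq0t.eventually_lt_const (hp i)).exists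
  set m : ℕ → ℕ := fun i => Nat.find (hm i) with hmdef
  have hm_spec : ∀ i, q (m i) < p i := fun i => Nat.find_spec (hm i)
  have hm_min : ∀ i j, j < m i → p i ≤ q j := fun i j hj => le_of_not_gt (Nat.find_min (hm i) hj)
  have hSfin : {i | q 0 < p i}.Finite := by
    have := hps.tendsto_cofinite_zero
    have hev : ∀ᶠ i in cofinite, p i < q 0 := this.eventually_lt_const (hq 0)
    rw [eventually_cofinite] at hev
    apply Set.Finite.subset hev
    intro i hi
    simp only [Set.mem_setOf_eq] at hi ⊢
    intro h; linarith
  set N₀ : ℕ := hSfin.toFinset.card with hN₀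
  -- key per-n inequality
  have key : ∀ n : ℕ, tailIndex p n ≤ (N₀:ℝ) + (M:ℝ) + 2*(M:ℝ)*tailIndex q n := by
    intro n
    rw [htp n]
    apply Summable.tsum_le_of_sum_le (hsumf' n)
    intro F
    have hmaps : ∀ i ∈ F, m i ∈ F.image m := fun i hi => Finset.mem_image_of_mem m hi
    rw [← Finset.sum_fiberwise_of_maps_to hmaps]
    set J := F.image m with hJ
    set peak : ℕ → ℝ :=
      fun k => if q (k+1) * ((n:ℝ)+1) < 1 ∧ 1 ≤ q k * ((n:ℝ)+1) then 1 else 0 with hpeak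
    set v : ℕ → ℝ := fun j => if j = 0 then (N₀:ℝ)
      else (M:ℝ) * ((n:ℝ)*(q j * (1-q j)^n) + (n:ℝ)*(q (j-1) * (1-q (j-1))^n) + peak (j-1))
      with hv
    have hpeaknn : ∀ k, 0 ≤ peak k := by
      intro k; rw [hpeak]; dsimp only; split <;> norm_num
    have hgq : ∀ k, 0 ≤ (n:ℝ)*(q k * (1-q k)^n) := by
      intro k
      have h1 : (0:ℝ) ≤ (1 - q k)^n := pow_nonneg (by linarith [hqle k]) n
      have := (hq k).le
      positivity
    have hvnn : ∀ j, 0 ≤ v j := by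
      intro j; rw [hv]; dsimp only
      split
      · positivity
      · have := hgq j; have := hgq (j-1); have := hpeaknn (j-1); positivity
    have step1 : ∑ j ∈ J, ∑ i ∈ F.filter (fun i => m i = j), (n:ℝ) * (p i * (1 - p i)^n)
        ≤ ∑ j ∈ J, v j := by
      apply Finset.sum_le_sum
      intro j hj
      rcases Nat.eq_zero_or_pos j with rfl | hjpos
      · -- fiber 0
        have hsub : F.filter (fun i => m i = 0) ⊆ hSfin.toFinset := by
          intro i hi
          rw [Finset.mem_filter] at hi
          rw [Set.Finite.mem_toFinset]
          have : q 0 < p i := by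
            have := hm_spec i
            rwa [hi.2] at this
          exact this
        calc ∑ i ∈ F.filter (fun i => m i = 0), (n:ℝ) * (p i * (1 - p i)^n)
            ≤ (F.filter (fun i => m i = 0)).card • (1:ℝ) := by
              apply Finset.sum_le_card_nsmul
              intro i _
              exact aux_nmul_le_one n (hp i).le (hple i)
          _ = ((F.filter (fun i => m i = 0)).card : ℝ) := by rw [nsmul_eq_mul, mul_one]
          _ ≤ (N₀:ℝ) := by
              exact_mod_cast Nat.cast_le.mpr (Finset.card_le_card hsub)
          _ = v 0 := by simp [hv]
      · -- fiber j = k+1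
        obtain ⟨k, rfl⟩ : ∃ k, j = k + 1 := ⟨j - 1, (Nat.succ_pred_eq_of_pos hjpos).symm⟩
        have hsub : ((F.filter (fun i => m i = k+1)) : Set ℕ)
            ⊆ {i : ℕ | q (k + 1) < p i ∧ p i ≤ q k} := by
          intro i hi
          simp only [Finset.coe_filter, Set.mem_setOf_eq] at hi
          have h1 : q (k+1) < p i := by
            have := hm_spec i; rwa [hi.2] at this
          have h2 : p i ≤ q k := hm_min i k (by rw [hi.2]; exact Nat.lt_succ_self k)
          exact ⟨h1, h2⟩
        have hcard : (F.filter (fun i => m i = k+1)).card ≤ M := by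
          have h1 := (Set.encard_mono hsub).trans (hdomM k)
          rw [Set.encard_coe_eq_coe_finsetCard] at h1
          exact_mod_cast h1
        have hbnd : ∀ i ∈ F.filter (fun i => m i = k+1),
            (n:ℝ) * (p i * (1 - p i)^n)
              ≤ (n:ℝ)*(q (k+1) * (1-q (k+1))^n) + (n:ℝ)*(q k * (1-q k)^n) + peak k := by
          intro i hi
          have hi' := hsub (Finset.mem_coe.mpr hi)
          simp only [Set.mem_setOf_eq] at hi'
          exact aux_key n (hq (k+1)).le hi'.1 hi'.2 (hqle k)
        have hbnn : 0 ≤ (n:ℝ)*(q (k+1) * (1-q (k+1))^n) + (n:ℝ)*(q k * (1-q k)^n) + peak k := by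
          have := hgq (k+1); have := hgq k; have := hpeaknn k; linarith
        calc ∑ i ∈ F.filter (fun i => m i = k+1), (n:ℝ) * (p i * (1 - p i)^n)
            ≤ (F.filter (fun i => m i = k+1)).card •
                ((n:ℝ)*(q (k+1) * (1-q (k+1))^n) + (n:ℝ)*(q k * (1-q k)^n) + peak k) :=
              Finset.sum_le_card_nsmul _ _ _ hbnd
          _ ≤ (M:ℝ) * ((n:ℝ)*(q (k+1) * (1-q (k+1))^n) + (n:ℝ)*(q k * (1-q k)^n) + peak k) := by
              rw [nsmul_eq_mul]
              apply mul_le_mul_of_nonneg_right _ hbnn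
              exact_mod_cast hcard
          _ = v (k+1) := by rw [hv]; simp
    have step2 : ∑ j ∈ J, v j ≤ (N₀:ℝ) + (M:ℝ) * (tailIndex q n + tailIndex q n + 1) := by
      rw [← Finset.sum_filter_add_sum_filter_not J (fun j => j = 0) v]
      have h0 : ∑ j ∈ J.filter (fun j => j = 0), v j ≤ (N₀:ℝ) := by
        calc ∑ j ∈ J.filter (fun j => j = 0), v j ≤ ∑ j ∈ {0}, v j := by
              apply Finset.sum_le_sum_of_subset_of_nonneg
              · intro j hj
                rw [Finset.mem_filter] at hj
                simp [hj.2]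
              · intro j _ _; exact hvnn j
          _ = v 0 := Finset.sum_singleton _ _
          _ = (N₀:ℝ) := by simp [hv]
      set J' := J.filter (fun j => ¬ j = 0) with hJ'
      have hne : ∀ j ∈ J', j ≠ 0 := fun j hj => (Finset.mem_filter.mp hj).2
      have hsplit : ∑ j ∈ J', v j
          = (M:ℝ) * (∑ j ∈ J', (n:ℝ)*(q j * (1-q j)^n)
            + ∑ j ∈ J', (n:ℝ)*(q (j-1) * (1-q (j-1))^n)
            + ∑ j ∈ J', peak (j-1)) := by
        rw [← Finset.sum_add_distrib, ← Finset.sum_add_distrib, Finset.mul_sum]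
        apply Finset.sum_congr rfl
        intro j hj
        rw [hv]; simp only [hne j hj, if_false]
      have hA : ∑ j ∈ J', (n:ℝ)*(q j * (1-q j)^n) ≤ tailIndex q n := by
        rw [htq n]
        exact Summable.sum_le_tsum J' (fun k _ => hgq k) (hsumq' n)
      have hB : ∑ j ∈ J', (n:ℝ)*(q (j-1) * (1-q (j-1))^n) ≤ tailIndex q n := by
        rw [htq n]
        have hinj : ∀ x ∈ J', ∀ y ∈ J', x - 1 = y - 1 → x = y := by
          intro x hx y hy hxy
          have := hne x hx; have := hne y hy
          omega
        calc ∑ j ∈ J', (n:ℝ)*(q (j-1) * (1-q (j-1))^n)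
            = ∑ k ∈ J'.image (fun j => j - 1), (n:ℝ)*(q k * (1-q k)^n) :=
              (Finset.sum_image (f := fun k => (n:ℝ)*(q k * (1-q k)^n)) hinj).symm
          _ ≤ ∑' k, (n:ℝ)*(q k * (1-q k)^n) :=
              Summable.sum_le_tsum _ (fun k _ => hgq k) (hsumq' n)
      have hP : ∑ j ∈ J', peak (j-1) ≤ 1 := by
        rw [hpeak]
        simp only
        rw [Finset.sum_boole]
        have hcard1 : (J'.filter (fun j => q (j-1+1) * ((n:ℝ)+1) < 1 ∧ 1 ≤ q (j-1) * ((n:ℝ)+1))).card ≤ 1 := by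
          rw [Finset.card_le_one]
          intro j₁ h₁ j₂ h₂
          rw [Finset.mem_filter] at h₁ h₂
          have hj₁ := hne j₁ h₁.1
          have hj₂ := hne j₂ h₂.1
          obtain ⟨ha₁, hb₁⟩ := h₁.2
          obtain ⟨ha₂, hb₂⟩ := h₂.2
          by_contra hnej
          rcases Nat.lt_or_ge (j₁-1) (j₂-1) with hlt | hge
          · have hle : j₁ - 1 + 1 ≤ j₂ - 1 := hlt
            have := hqmono hle
            nlinarith [this]
          · rcases Nat.lt_or_ge (j₂-1) (j₁-1) with hlt' | hge'
            · have hle : j₂ - 1 + 1 ≤ j₁ - 1 := hlt'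
              have := hqmono hle
              nlinarith [this]
            · omega
        exact_mod_cast hcard1
      calc ∑ j ∈ J.filter (fun j => j = 0), v j + ∑ j ∈ J', v j
          ≤ (N₀:ℝ) + (M:ℝ) * (∑ j ∈ J', (n:ℝ)*(q j * (1-q j)^n)
              + ∑ j ∈ J', (n:ℝ)*(q (j-1) * (1-q (j-1))^n) + ∑ j ∈ J', peak (j-1)) := by
            rw [hsplit] at *
            linarith
        _ ≤ (N₀:ℝ) + (M:ℝ) * (tailIndex q n + tailIndex q n + 1) := by
            have hMnn : (0:ℝ) ≤ (M:ℝ) := Nat.cast_nonneg M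
            have := mul_le_mul_of_nonneg_left (add_le_add (add_le_add hA hB) hP) hMnn
            linarith
    calc ∑ j ∈ J, ∑ i ∈ F.filter (fun i => m i = j), (n:ℝ) * (p i * (1 - p i)^n)
        ≤ ∑ j ∈ J, v j := step1
      _ ≤ (N₀:ℝ) + (M:ℝ) * (tailIndex q n + tailIndex q n + 1) := step2
      _ = (N₀:ℝ) + (M:ℝ) + 2*(M:ℝ)*tailIndex q n := by ring
  -- eventual upper bound
  set B : ℝ := (N₀:ℝ) + (M:ℝ) + 2*(M:ℝ)*(c+1) with hB
  have hevq : ∀ᶠ n in atTop, tailIndex q n < c + 1 := by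
    have hlt : Filter.limsup (fun n : ℕ => ((tailIndex q n : ℝ) : EReal)) atTop
        < ((c+1 : ℝ) : EReal) := by
      rw [hlimq]
      exact_mod_cast lt_add_one c
    filter_upwards [eventually_lt_of_limsup_lt hlt] with n hn
    exact_mod_cast hn
  have hev : ∀ᶠ n in atTop, tailIndex p n ≤ B := by
    filter_upwards [hevq] with n hn
    have h1 := key n
    have hMnn : (0:ℝ) ≤ (M:ℝ) := Nat.cast_nonneg M
    have h2 : 2*(M:ℝ)*tailIndex q n ≤ 2*(M:ℝ)*(c+1) := by nlinarith
    rw [hB]; linarith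
  -- conclude
  set L := Filter.limsup (fun n : ℕ => ((tailIndex p n : ℝ) : EReal)) atTop with hL
  have hub : L ≤ ((B : ℝ) : EReal) := by
    refine limsup_le_of_le (by isBoundedDefault) ?_
    filter_upwards [hev] with n hn
    exact_mod_cast hn
  have hlb : ((1/8 : ℝ) : EReal) ≤ L := by
    refine le_limsup_of_frequently_le ?_ (by isBoundedDefault)
    apply hfreq.mono
    intro n hn
    exact_mod_cast hn
  have hTop : L ≠ ⊤ := (lt_of_le_of_lt hub (EReal.coe_lt_top _)).ne
  have hBot : L ≠ ⊥ := (lt_of_lt_of_le (EReal.bot_lt_coe _) hlb).ne'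
  refine ⟨L.toReal, ?_, ?_⟩
  · have h1 : ((1/8 : ℝ) : EReal) ≤ ((L.toReal : ℝ) : EReal) := by
      rw [EReal.coe_toReal hTop hBot]; exact hlb
    have : (1/8 : ℝ) ≤ L.toReal := by exact_mod_cast h1
    linarith
  · exact (EReal.coe_toReal hTop hBot).symm
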